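/- (Continuity of h(T, ·) in the entropy metric) Let (X, μ) be a probability space, T : X → X a measure-preserving map, and f : X → F, g : X → G measurable maps into finite sets. Then |h(T, f) − h(T, g)| ≤ H[f | g] + H[g | f], where h(T, f) = lim_{n→∞} H(ξ_T^n)/n and H[· | ·] denotes conditional Shannon entropy. -/

import Mathlib

open MeasureTheory Filter Set

set_option linter.unusedSectionVars false

/-- Shannon entropy of a finite measurable partition, encoded as a map `f : X → F`
into a finite set, with respect to the measure `μ` (convention `0 log 0 = 0`). -/
noncomputable def shannonEntropy {X : Type*} [MeasurableSpace X] (μ : Measure X)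
    {F : Type*} [Fintype F] (f : X → F) : ℝ :=
  -∑ a : F, (μ (f ⁻¹' {a})).toReal * Real.log (μ (f ⁻¹' {a})).toReal

/-- `H(ξ_T^n)`: the Shannon entropy of the joint partition
`x ↦ (f x, f (T x), …, f (T^[n-1] x))`. -/
noncomputable def jointH {X : Type*} [MeasurableSpace X] (μ : Measure X)
    (T : X → X) {F : Type*} [Fintype F] (f : X → F) (n : ℕ) : ℝ :=
  shannonEntropy μ (fun x => (fun i : Fin n => f (T^[(i : ℕ)] x)))

/-- Conditional Shannon entropy `H[f | g]` of `f` given `g`: the average over the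
cells of `g` of the entropy of `f` with respect to the normalized restriction of `μ`. -/
noncomputable def condShannonEntropy {X : Type*} [MeasurableSpace X] (μ : Measure X)
    {F G : Type*} [Fintype F] [Fintype G] (f : X → F) (g : X → G) : ℝ :=
  ∑ b : G, (μ (g ⁻¹' {b})).toReal *
    shannonEntropy ((μ (g ⁻¹' {b}))⁻¹ • μ.restrict (g ⁻¹' {b})) f


lemma negMulLog_add_le {x y : ℝ} (hx : 0 ≤ x) (hy : 0 ≤ y) :
    Real.negMulLog (x + y) ≤ Real.negMulLog x + Real.negMulLog y := by
  have h1 : ∀ a b : ℝ, 0 ≤ a → 0 ≤ b → -(a * Real.log (a + b)) ≤ -(a * Real.log a) := by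
    intro a b ha hb
    rcases eq_or_lt_of_le ha with h | h
    · simp [← h]
    · have := Real.log_le_log h (by linarith : a ≤ a + b)
      nlinarith
  have := h1 x y hx hy
  have := h1 y x hy hx
  simp only [Real.negMulLog, neg_mul] at *
  have hxy : x + y = y + x := by ring
  calc -((x+y) * Real.log (x+y)) = -(x * Real.log (x+y)) + -(y * Real.log (y+x)) := by
        rw [← hxy]; ring
    _ ≤ -(x * Real.log x) + -(y * Real.log y) := by
        apply add_le_add
        · exact h1 x y hx hy
        · rw [hxy] at *; exact h1 y x hy hx

lemma negMulLog_sum_le {ι : Type*} (s : Finset ι) (p : ι → ℝ) (hp : ∀ i ∈ s, 0 ≤ p i) :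
    Real.negMulLog (∑ i ∈ s, p i) ≤ ∑ i ∈ s, Real.negMulLog (p i) := by
  induction s using Finset.cons_induction with
  | empty => simp
  | cons a s ha ih =>
    rw [Finset.sum_cons, Finset.sum_cons]
    calc Real.negMulLog (p a + ∑ i ∈ s, p i)
        ≤ Real.negMulLog (p a) + Real.negMulLog (∑ i ∈ s, p i) :=
          negMulLog_add_le (hp a (Finset.mem_cons_self a s))
            (Finset.sum_nonneg fun i hi => hp i (Finset.mem_cons_of_mem hi))
      _ ≤ _ := by
          have := ih (fun i hi => hp i (Finset.mem_cons_of_mem hi))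
          linarith

lemma sum_mul_negMulLog_div {ι : Type*} [Fintype ι] (q : ι → ℝ) (hq : ∀ i, 0 ≤ q i) :
    ∑ i, (∑ j, q j) * Real.negMulLog (q i / ∑ j, q j)
      = (∑ i, Real.negMulLog (q i)) - Real.negMulLog (∑ j, q j) := by
  set s := ∑ j, q j with hs
  rcases eq_or_lt_of_le (Finset.sum_nonneg fun i _ => hq i : (0:ℝ) ≤ s) with h | h
  · have hqz : ∀ i, q i = 0 := by
      intro i
      have := (Finset.sum_eq_zero_iff_of_nonneg (fun i _ => hq i)).mp h.symm
      exact this i (Finset.mem_univ i)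
    have hs0 : s = 0 := h.symm
    simp [hqz, hs0]
  · have hne : s ≠ 0 := ne_of_gt h
    have key : ∀ i, Real.negMulLog (q i) =
        (q i / s) * Real.negMulLog s + s * Real.negMulLog (q i / s) := by
      intro i
      have : q i = s * (q i / s) := by field_simp
      calc Real.negMulLog (q i) = Real.negMulLog (s * (q i / s)) := by rw [← this]
        _ = (q i / s) * Real.negMulLog s + s * Real.negMulLog (q i / s) :=
          Real.negMulLog_mul s (q i / s)
    have hsumdiv : ∑ i, q i / s = 1 := by
      rw [← Finset.sum_div]; field_simp; exact hs.symm
    have : ∑ i, Real.negMulLog (q i)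
        = (∑ i, (q i / s)) * Real.negMulLog s + ∑ i, s * Real.negMulLog (q i / s) := by
      rw [Finset.sum_mul, ← Finset.sum_add_distrib]
      exact Finset.sum_congr rfl fun i _ => key i
    rw [hsumdiv, one_mul] at this
    linarith

/-- Jensen step for conditioning on a coarser partition. -/
lemma jensen_cell {ι : Type*} (t : Finset ι) (p q : ι → ℝ)
    (hq : ∀ i ∈ t, 0 ≤ q i) (hqp : ∀ i ∈ t, q i ≤ p i) :
    ∑ i ∈ t, p i * Real.negMulLog (q i / p i)
      ≤ (∑ i ∈ t, p i) * Real.negMulLog ((∑ i ∈ t, q i) / (∑ i ∈ t, p i)) := by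
  have hp : ∀ i ∈ t, 0 ≤ p i := fun i hi => le_trans (hq i hi) (hqp i hi)
  set s := ∑ i ∈ t, p i with hs
  rcases eq_or_lt_of_le (Finset.sum_nonneg hp : (0:ℝ) ≤ s) with h | h
  · have hpz : ∀ i ∈ t, p i = 0 :=
      (Finset.sum_eq_zero_iff_of_nonneg hp).mp h.symm
    have hs0 : s = 0 := h.symm
    rw [Finset.sum_eq_zero (fun i hi => by rw [hpz i hi]; ring), hs0]
    simp
  · have hne : s ≠ 0 := ne_of_gt h
    have jensen := Real.concaveOn_negMulLog.le_map_sum (t := t)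
      (w := fun i => p i / s) (p := fun i => q i / p i)
      (fun i hi => div_nonneg (hp i hi) h.le)
      (by rw [← Finset.sum_div]; field_simp; exact hs.symm)
      (fun i hi => Set.mem_Ici.mpr (div_nonneg (hq i hi) (hp i hi)))
    simp only [smul_eq_mul] at jensen
    have hpt : ∀ i ∈ t, p i / s * (q i / p i) = q i / s := by
      intro i hi
      rcases eq_or_lt_of_le (hp i hi) with h0 | h0
      · have : q i = 0 := le_antisymm (by rw [h0]; exact hqp i hi) (hq i hi)
        rw [← h0, this]; simp
      · field_simp
    rw [Finset.sum_congr rfl hpt, ← Finset.sum_div] at jensen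
    calc ∑ i ∈ t, p i * Real.negMulLog (q i / p i)
        = s * ∑ i ∈ t, (p i / s) * Real.negMulLog (q i / p i) := by
          rw [Finset.mul_sum]
          refine Finset.sum_congr rfl fun i hi => ?_
          field_simp
      _ ≤ s * Real.negMulLog ((∑ i ∈ t, q i) / s) := by
          exact mul_le_mul_of_nonneg_left jensen h.le

open MeasureTheory Filter Set

section Meas

variable {X : Type*} [MeasurableSpace X] {μ : Measure X}
variable {F G K : Type*} [Fintype F] [MeasurableSpace F] [MeasurableSingletonClass F]
  [Fintype G] [MeasurableSpace G] [MeasurableSingletonClass G]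
  [Fintype K] [MeasurableSpace K] [MeasurableSingletonClass K]

lemma shannon_eq (f : X → F) :
    shannonEntropy μ f = ∑ a : F, Real.negMulLog (μ (f ⁻¹' {a})).toReal := by
  unfold shannonEntropy
  rw [← Finset.sum_neg_distrib]
  exact Finset.sum_congr rfl fun a _ => by rw [Real.negMulLog, neg_mul]

lemma meas_ne_top (hμ : μ Set.univ ≠ ⊤) (A : Set X) : μ A ≠ ⊤ :=
  ((measure_mono (Set.subset_univ A)).trans_lt (lt_top_iff_ne_top.mpr hμ)).ne

lemma shannon_nonneg (hμ : μ Set.univ ≤ 1) (f : X → F) : 0 ≤ shannonEntropy μ f := by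
  rw [shannon_eq]
  refine Finset.sum_nonneg fun a _ => Real.negMulLog_nonneg ENNReal.toReal_nonneg ?_
  have h1 : μ (f ⁻¹' {a}) ≤ 1 := (measure_mono (Set.subset_univ _)).trans hμ
  simpa using ENNReal.toReal_mono ENNReal.one_ne_top h1

/-- Abstract disjoint-union lemma for `toReal` of measures. -/
lemma toReal_measure_eq_sum {ι : Type*} (hμ : μ Set.univ ≠ ⊤) (s : Finset ι)
    (A : ι → Set X) (B : Set X) (hA : ∀ i ∈ s, MeasurableSet (A i))
    (hd : (s : Set ι).PairwiseDisjoint A) (hB : B = ⋃ i ∈ s, A i) :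
    (μ B).toReal = ∑ i ∈ s, (μ (A i)).toReal := by
  rw [hB, measure_biUnion_finset hd hA,
    ENNReal.toReal_sum fun i _ => meas_ne_top hμ _]

lemma pairwiseDisjoint_fibers {ι H : Type*} (h : X → H) (e : ι → H) (s : Finset ι)
    (he : Set.InjOn e s) : (s : Set ι).PairwiseDisjoint (fun i => h ⁻¹' {e i}) := by
  intro i hi j hj hij
  refine Set.disjoint_left.mpr fun x hx hx' => hij (he hi hj ?_)
  simp only [Set.mem_preimage, Set.mem_singleton_iff] at hx hx'
  rw [← hx, ← hx']

/-- `toReal` of a coarsened partition cell. -/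
lemma pr_comp [DecidableEq G] (hμ : μ Set.univ ≠ ⊤) {f : X → F} (hf : Measurable f)
    (φ : F → G) (b : G) :
    (μ ((fun x => φ (f x)) ⁻¹' {b})).toReal
      = ∑ a ∈ Finset.univ.filter (fun a => φ a = b), (μ (f ⁻¹' {a})).toReal := by
  refine toReal_measure_eq_sum hμ _ _ _
    (fun a _ => hf (measurableSet_singleton a))
    (pairwiseDisjoint_fibers f id _ (Set.injOn_id _)) ?_
  ext x
  simp only [Set.mem_preimage, Set.mem_singleton_iff, Set.mem_iUnion, Finset.mem_coe,
    Finset.mem_filter, Finset.mem_univ, true_and, id]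
  constructor
  · intro hx; exact ⟨f x, hx, rfl⟩
  · rintro ⟨a, ha, rfl⟩; exact ha

/-- Marginal: summing the joint distribution over the first coordinate. -/
lemma pr_snd (hμ : μ Set.univ ≠ ⊤) {f : X → F} {g : X → G}
    (hf : Measurable f) (hg : Measurable g) (b : G) :
    (μ (g ⁻¹' {b})).toReal
      = ∑ a : F, (μ ((fun x => (f x, g x)) ⁻¹' {(a, b)})).toReal := by
  refine toReal_measure_eq_sum hμ Finset.univ _ _
    (fun a _ => (hf.prodMk hg) (measurableSet_singleton (a, b)))
    (pairwiseDisjoint_fibers (fun x => (f x, g x)) (fun a => (a, b)) _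
      (fun a _ a' _ h => (Prod.mk.injEq .. ▸ h).1)) ?_
  ext x
  simp only [Set.mem_preimage, Set.mem_singleton_iff, Set.mem_iUnion, Finset.mem_coe,
    Finset.mem_univ, Prod.mk.injEq]
  constructor
  · intro hx; exact ⟨f x, trivial, rfl, hx⟩
  · rintro ⟨a, -, -, hx⟩; exact hx

/-- Fiber sum for conditioning coarsening. -/
lemma pr_fiber [DecidableEq K] (hμ : μ Set.univ ≠ ⊤) {f : X → F} {g : X → G}
    (hf : Measurable f) (hg : Measurable g) (φ : G → K) (a : F) (c : K) :
    (μ ((fun x => (f x, φ (g x))) ⁻¹' {(a, c)})).toReal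
      = ∑ b ∈ Finset.univ.filter (fun b => φ b = c),
          (μ ((fun x => (f x, g x)) ⁻¹' {(a, b)})).toReal := by
  refine toReal_measure_eq_sum hμ _ _ _
    (fun b _ => (hf.prodMk hg) (measurableSet_singleton (a, b)))
    (pairwiseDisjoint_fibers (fun x => (f x, g x)) (fun b => (a, b)) _
      (fun b _ b' _ h => (Prod.mk.injEq .. ▸ h).2)) ?_
  ext x
  simp only [Set.mem_preimage, Set.mem_singleton_iff, Set.mem_iUnion, Finset.mem_coe,
    Finset.mem_filter, Finset.mem_univ, true_and, Prod.mk.injEq]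
  constructor
  · rintro ⟨hfa, hc⟩; exact ⟨g x, hc, hfa, rfl⟩
  · rintro ⟨b, hb, hfa, hgb⟩; exact ⟨hfa, hgb ▸ hb⟩

end Meas

section Meas2

variable {X : Type*} [MeasurableSpace X] {μ : Measure X}
variable {F G K : Type*} [Fintype F] [MeasurableSpace F] [MeasurableSingletonClass F]
  [Fintype G] [MeasurableSpace G] [MeasurableSingletonClass G]
  [Fintype K] [MeasurableSpace K] [MeasurableSingletonClass K]

lemma condShannon_eq [IsProbabilityMeasure μ] {f : X → F} {g : X → G}
    (hf : Measurable f) (hg : Measurable g) :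
    condShannonEntropy μ f g = ∑ b : G, ∑ a : F,
      (μ (g ⁻¹' {b})).toReal *
        Real.negMulLog ((μ ((fun x => (f x, g x)) ⁻¹' {(a, b)})).toReal
          / (μ (g ⁻¹' {b})).toReal) := by
  unfold condShannonEntropy
  refine Finset.sum_congr rfl fun b _ => ?_
  rw [shannon_eq, Finset.mul_sum]
  refine Finset.sum_congr rfl fun a _ => ?_
  congr 2
  rw [Measure.smul_apply, smul_eq_mul,
    Measure.restrict_apply (hf (measurableSet_singleton a)),
    ENNReal.toReal_mul, ENNReal.toReal_inv]
  rw [inv_mul_eq_div]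
  have hset : f ⁻¹' {a} ∩ g ⁻¹' {b} = (fun x => (f x, g x)) ⁻¹' {(a, b)} := by
    ext x
    simp only [Set.mem_inter_iff, Set.mem_preimage, Set.mem_singleton_iff, Prod.mk.injEq]
  rw [hset]

lemma chain_rule [IsProbabilityMeasure μ] {f : X → F} {g : X → G}
    (hf : Measurable f) (hg : Measurable g) :
    shannonEntropy μ (fun x => (f x, g x))
      = shannonEntropy μ g + condShannonEntropy μ f g := by
  have hμ : μ Set.univ ≠ ⊤ := by simp
  rw [condShannon_eq hf hg, shannon_eq, shannon_eq, Fintype.sum_prod_type_right,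
    ← Finset.sum_add_distrib]
  refine Finset.sum_congr rfl fun b _ => ?_
  have marg := pr_snd hμ hf hg b
  set q : F → ℝ := fun a => (μ ((fun x => (f x, g x)) ⁻¹' {(a, b)})).toReal with hqdef
  have hq : ∀ a, 0 ≤ q a := fun a => ENNReal.toReal_nonneg
  have key := sum_mul_negMulLog_div q hq
  have marg' : (μ (g ⁻¹' {b})).toReal = ∑ j, q j := marg
  rw [marg']
  linarith [key]

lemma shannon_comp_le [DecidableEq G] (hμ : μ Set.univ ≠ ⊤) {f : X → F}
    (hf : Measurable f) (φ : F → G) :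
    shannonEntropy μ (fun x => φ (f x)) ≤ shannonEntropy μ f := by
  rw [shannon_eq, shannon_eq,
    ← Finset.sum_fiberwise_of_maps_to (g := φ) (fun a _ => Finset.mem_univ (φ a))
      (fun a => Real.negMulLog (μ (f ⁻¹' {a})).toReal)]
  refine Finset.sum_le_sum fun b _ => ?_
  rw [pr_comp hμ hf φ b]
  exact negMulLog_sum_le _ _ fun a _ => ENNReal.toReal_nonneg

lemma shannon_comp_mp {S : X → X} (hS : MeasurePreserving S μ μ) {f : X → F}
    (hf : Measurable f) :
    shannonEntropy μ (fun x => f (S x)) = shannonEntropy μ f := by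
  rw [shannon_eq, shannon_eq]
  refine Finset.sum_congr rfl fun a _ => ?_
  congr 2
  exact hS.measure_preimage ((hf (measurableSet_singleton a)).nullMeasurableSet)

lemma condShannon_comp_mp [IsProbabilityMeasure μ] {S : X → X}
    (hS : MeasurePreserving S μ μ) {f : X → F} {g : X → G}
    (hf : Measurable f) (hg : Measurable g) :
    condShannonEntropy μ (fun x => f (S x)) (fun x => g (S x))
      = condShannonEntropy μ f g := by
  rw [condShannon_eq (f := fun x => f (S x)) (g := fun x => g (S x))
    (hf.comp hS.measurable) (hg.comp hS.measurable), condShannon_eq hf hg]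
  refine Finset.sum_congr rfl fun b _ => Finset.sum_congr rfl fun a _ => ?_
  have h1 : μ ((fun x => g (S x)) ⁻¹' {b}) = μ (g ⁻¹' {b}) :=
    hS.measure_preimage (hg (measurableSet_singleton b)).nullMeasurableSet
  have h2 : μ ((fun x => (f (S x), g (S x))) ⁻¹' {(a, b)})
      = μ ((fun x => (f x, g x)) ⁻¹' {(a, b)}) :=
    hS.measure_preimage ((hf.prodMk hg) (measurableSet_singleton (a, b))).nullMeasurableSet
  rw [h1, h2]

end Meas2

section Meas3

variable {X : Type*} [MeasurableSpace X] {μ : Measure X}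
variable {F G K : Type*} [Fintype F] [MeasurableSpace F] [MeasurableSingletonClass F]
  [Fintype G] [MeasurableSpace G] [MeasurableSingletonClass G]
  [Fintype K] [MeasurableSpace K] [MeasurableSingletonClass K]

lemma cond_meas_univ_le (S : Set X) : ((μ S)⁻¹ • μ.restrict S) Set.univ ≤ 1 := by
  rw [Measure.smul_apply, smul_eq_mul, Measure.restrict_apply MeasurableSet.univ,
    Set.univ_inter]
  rcases eq_or_ne (μ S) 0 with h | h
  · simp [h]
  rcases eq_or_ne (μ S) ⊤ with h' | h'
  · simp [h']
  · rw [ENNReal.inv_mul_cancel h h']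

lemma cond_meas_ne_top (S : Set X) : ((μ S)⁻¹ • μ.restrict S) Set.univ ≠ ⊤ :=
  ((cond_meas_univ_le S).trans_lt ENNReal.one_lt_top).ne

lemma cond_isProb (S : Set X) (h : μ S ≠ 0) (h' : μ S ≠ ⊤) :
    IsProbabilityMeasure ((μ S)⁻¹ • μ.restrict S) := by
  constructor
  rw [Measure.smul_apply, smul_eq_mul, Measure.restrict_apply MeasurableSet.univ,
    Set.univ_inter, ENNReal.inv_mul_cancel h h']

lemma condShannon_nonneg (f : X → F) (g : X → G) : 0 ≤ condShannonEntropy μ f g :=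
  Finset.sum_nonneg fun b _ => mul_nonneg ENNReal.toReal_nonneg
    (shannon_nonneg (cond_meas_univ_le _) f)

/-- Coarsening the first argument decreases conditional entropy. -/
lemma condShannon_comp_le [DecidableEq K] {f : X → F} (hf : Measurable f)
    (φ : F → K) (g : X → G) :
    condShannonEntropy μ (fun x => φ (f x)) g ≤ condShannonEntropy μ f g :=
  Finset.sum_le_sum fun b _ => mul_le_mul_of_nonneg_left
    (shannon_comp_le (cond_meas_ne_top _) hf φ) ENNReal.toReal_nonneg

/-- Conditioning on a coarser partition increases conditional entropy. -/
lemma condShannon_le_comp [IsProbabilityMeasure μ] [DecidableEq K]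
    {f : X → F} {g : X → G} (hf : Measurable f) (hg : Measurable g) (φ : G → K) :
    condShannonEntropy μ f g ≤ condShannonEntropy μ f (fun x => φ (g x)) := by
  have hμ : μ Set.univ ≠ ⊤ := by simp
  have hφ : Measurable φ := Measurable.of_discrete
  rw [condShannon_eq hf hg,
    condShannon_eq (g := fun x => φ (g x)) hf (hφ.comp hg)]
  rw [← Finset.sum_fiberwise_of_maps_to (g := φ) (fun b _ => Finset.mem_univ (φ b))
    (fun b => ∑ a : F, (μ (g ⁻¹' {b})).toReal *
      Real.negMulLog ((μ ((fun x => (f x, g x)) ⁻¹' {(a, b)})).toReal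
        / (μ (g ⁻¹' {b})).toReal))]
  refine Finset.sum_le_sum fun c _ => ?_
  rw [Finset.sum_comm]
  refine Finset.sum_le_sum fun a _ => ?_
  rw [pr_comp hμ hg φ c, pr_fiber hμ hf hg φ a c]
  refine jensen_cell _ _ _ (fun b _ => ENNReal.toReal_nonneg) fun b _ => ?_
  refine ENNReal.toReal_mono (meas_ne_top hμ _) (measure_mono fun x hx => ?_)
  simp only [Set.mem_preimage, Set.mem_singleton_iff, Prod.mk.injEq] at hx ⊢
  exact hx.2

lemma condShannon_unit [IsProbabilityMeasure μ] (f : X → F) :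
    condShannonEntropy μ f (fun _ : X => ()) = shannonEntropy μ f := by
  unfold condShannonEntropy
  rw [Fintype.sum_unique]
  have hpre : (fun _ : X => ()) ⁻¹' {()} = Set.univ := by
    ext x; simp
  rw [hpre, measure_univ, inv_one, Measure.restrict_univ, one_smul]
  simp

lemma shannon_pair_le [IsProbabilityMeasure μ] {f : X → F} {g : X → G}
    (hf : Measurable f) (hg : Measurable g) :
    shannonEntropy μ (fun x => (f x, g x)) ≤ shannonEntropy μ f + shannonEntropy μ g := by
  rw [chain_rule hf hg]
  have h1 : condShannonEntropy μ f g ≤ condShannonEntropy μ f (fun _ : X => ()) :=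
    condShannon_le_comp hf hg (fun _ : G => ())
  rw [condShannon_unit f] at h1
  linarith

lemma condShannon_pair_le [IsProbabilityMeasure μ] {f₁ : X → F} {f₂ : X → K}
    {g : X → G} (h1 : Measurable f₁) (h2 : Measurable f₂) :
    condShannonEntropy μ (fun x => (f₁ x, f₂ x)) g
      ≤ condShannonEntropy μ f₁ g + condShannonEntropy μ f₂ g := by
  unfold condShannonEntropy
  rw [← Finset.sum_add_distrib]
  refine Finset.sum_le_sum fun b _ => ?_
  rcases eq_or_ne (μ (g ⁻¹' {b})) 0 with h | h
  · simp [h]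
  · haveI := cond_isProb (g ⁻¹' {b}) h (meas_ne_top (by simp) _)
    rw [← mul_add]
    exact mul_le_mul_of_nonneg_left (shannon_pair_le h1 h2) ENNReal.toReal_nonneg

end Meas3

section Dyn

variable {X : Type*} [MeasurableSpace X] {μ : Measure X} [IsProbabilityMeasure μ]
variable {T : X → X}
variable {F G : Type*} [Fintype F] [MeasurableSpace F] [MeasurableSingletonClass F]
  [Fintype G] [MeasurableSpace G] [MeasurableSingletonClass G]

/-- The joint coding map `ξ_T^n`. -/
private def xiMap (T : X → X) (f : X → F) (n : ℕ) : X → (Fin n → F) :=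
  fun x => fun i : Fin n => f (T^[(i : ℕ)] x)

lemma xiMap_measurable (hT : Measurable T) {f : X → F} (hf : Measurable f) (n : ℕ) :
    Measurable (xiMap T f n) :=
  measurable_pi_lambda _ fun i => hf.comp (hT.iterate (i : ℕ))

lemma jointH_eq (f : X → F) (n : ℕ) :
    jointH μ T f n = shannonEntropy μ (xiMap T f n) := rfl

lemma jointH_nonneg (f : X → F) (n : ℕ) : 0 ≤ jointH μ T f n :=
  shannon_nonneg (le_of_eq (measure_univ)) _

lemma jointH_subadditive (hT : MeasurePreserving T μ μ) {f : X → F}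
    (hf : Measurable f) (m n : ℕ) :
    jointH μ T f (m + n) ≤ jointH μ T f m + jointH μ T f n := by
  classical
  set u := xiMap T f m with hu
  set v : X → (Fin n → F) := fun x => xiMap T f n (T^[m] x) with hv
  have hum : Measurable u := xiMap_measurable hT.measurable hf m
  have hvm : Measurable v := (xiMap_measurable hT.measurable hf n).comp
    (hT.measurable.iterate m)
  set ψ : (Fin m → F) × (Fin n → F) → (Fin (m + n) → F) :=
    fun p i => if h : (i : ℕ) < m then p.1 ⟨i, h⟩ else p.2 ⟨(i : ℕ) - m, by omega⟩
    with hψ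
  have hrec : xiMap T f (m + n) = fun x => ψ (u x, v x) := by
    funext x
    funext i
    simp only [hψ, xiMap, hu, hv]
    split_ifs with h
    · rfl
    · show f (T^[(i : ℕ)] x) = f (T^[(i : ℕ) - m] (T^[m] x))
      rw [← Function.iterate_add_apply]
      congr 2
      omega
  have h1 : shannonEntropy μ (fun x => ψ (u x, v x))
      ≤ shannonEntropy μ (fun x => (u x, v x)) :=
    shannon_comp_le (by simp) (hum.prodMk hvm) ψ
  have h2 : shannonEntropy μ (fun x => (u x, v x))
      ≤ shannonEntropy μ u + shannonEntropy μ v := shannon_pair_le hum hvm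
  have h3 : shannonEntropy μ v = shannonEntropy μ (xiMap T f n) :=
    shannon_comp_mp (hT.iterate m) (xiMap_measurable hT.measurable hf n)
  rw [jointH_eq, jointH_eq, jointH_eq, hrec]
  rw [h3] at h2
  linarith

lemma condShannon_of_unique {C : Type*} [Fintype C] [MeasurableSpace C]
    [MeasurableSingletonClass C] [Unique C] (c : X → C)
    (g : X → G) : condShannonEntropy μ c g = 0 := by
  unfold condShannonEntropy
  refine Finset.sum_eq_zero fun b _ => ?_
  rcases eq_or_ne (μ (g ⁻¹' {b})) 0 with h | h
  · simp [h]
  · haveI := cond_isProb (μ := μ) (g ⁻¹' {b}) h (meas_ne_top (by simp) _)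
    have hz : shannonEntropy ((μ (g ⁻¹' {b}))⁻¹ • μ.restrict (g ⁻¹' {b})) c = 0 := by
      rw [shannon_eq, Fintype.sum_unique]
      have hpre : c ⁻¹' {(default : C)} = Set.univ :=
        Set.eq_univ_of_forall fun x => by
          simp only [Set.mem_preimage, Set.mem_singleton_iff]
          exact Subsingleton.elim _ _
      rw [hpre, measure_univ]
      simp
    rw [hz, mul_zero]

lemma condShannon_xi_le (hT : MeasurePreserving T μ μ) {f : X → F} {g : X → G}
    (hf : Measurable f) (hg : Measurable g) (n : ℕ) :
    condShannonEntropy μ (xiMap T f n) (xiMap T g n)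
      ≤ n * condShannonEntropy μ f g := by
  classical
  induction n with
  | zero =>
    rw [condShannon_of_unique]
    simp
  | succ n ih =>
    have hξf : ∀ k, Measurable (xiMap T f k) := xiMap_measurable hT.measurable hf
    have hξg : ∀ k, Measurable (xiMap T g k) := xiMap_measurable hT.measurable hg
    have hfT : Measurable (fun x => f (T^[n] x)) := hf.comp (hT.measurable.iterate n)
    -- recode ξ_{n+1} f as a coarsening of the pair (ξ_n f, f ∘ T^n)
    set ψ : (Fin n → F) × F → (Fin (n + 1) → F) :=
      fun p i => if h : (i : ℕ) < n then p.1 ⟨i, h⟩ else p.2 with hψ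
    have hrec : xiMap T f (n + 1)
        = fun x => ψ ((xiMap T f n x, f (T^[n] x))) := by
      funext x
      funext i
      simp only [hψ, xiMap]
      split_ifs with h
      · rfl
      · show f (T^[(i : ℕ)] x) = f (T^[n] x)
        congr 2
        omega
    have step1 : condShannonEntropy μ (xiMap T f (n + 1)) (xiMap T g (n + 1))
        ≤ condShannonEntropy μ (fun x => (xiMap T f n x, f (T^[n] x)))
            (xiMap T g (n + 1)) := by
      rw [hrec]
      exact condShannon_comp_le ((hξf n).prodMk hfT) ψ _
    have step2 : condShannonEntropy μ (fun x => (xiMap T f n x, f (T^[n] x)))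
          (xiMap T g (n + 1))
        ≤ condShannonEntropy μ (xiMap T f n) (xiMap T g (n + 1))
          + condShannonEntropy μ (fun x => f (T^[n] x)) (xiMap T g (n + 1)) :=
      condShannon_pair_le (hξf n) hfT
    -- coarsen the conditioning partition in both summands
    have step3 : condShannonEntropy μ (xiMap T f n) (xiMap T g (n + 1))
        ≤ condShannonEntropy μ (xiMap T f n) (xiMap T g n) := by
      have h := condShannon_le_comp (μ := μ) (hξf n) (hξg (n + 1))
        (fun v : Fin (n + 1) → G => fun i : Fin n => v i.castSucc)
      have e : (fun x => (fun v : Fin (n + 1) → G => fun i : Fin n => v i.castSucc)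
          (xiMap T g (n + 1) x)) = xiMap T g n := by
        funext x
        funext i
        simp [xiMap]
      rwa [e] at h
    have step4 : condShannonEntropy μ (fun x => f (T^[n] x)) (xiMap T g (n + 1))
        ≤ condShannonEntropy μ f g := by
      have h := condShannon_le_comp (μ := μ) hfT (hξg (n + 1))
        (fun v : Fin (n + 1) → G => v (Fin.last n))
      have e : (fun x => (fun v : Fin (n + 1) → G => v (Fin.last n))
          (xiMap T g (n + 1) x)) = fun x => g (T^[n] x) := by
        funext x
        simp [xiMap]
      rw [e] at h
      have h2 : condShannonEntropy μ (fun x => f (T^[n] x)) (fun x => g (T^[n] x))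
          = condShannonEntropy μ f g :=
        condShannon_comp_mp (hT.iterate n) hf hg
      rw [h2] at h
      exact h
    have : (n + 1 : ℝ) * condShannonEntropy μ f g
        = n * condShannonEntropy μ f g + condShannonEntropy μ f g := by ring
    push_cast
    linarith

lemma jointH_le (hT : MeasurePreserving T μ μ) {f : X → F} {g : X → G}
    (hf : Measurable f) (hg : Measurable g) (n : ℕ) :
    jointH μ T f n ≤ jointH μ T g n + n * condShannonEntropy μ f g := by
  classical
  have hξf : Measurable (xiMap T f n) := xiMap_measurable hT.measurable hf n
  have hξg : Measurable (xiMap T g n) := xiMap_measurable hT.measurable hg n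
  have h1 : jointH μ T f n
      ≤ shannonEntropy μ (fun x => (xiMap T f n x, xiMap T g n x)) := by
    rw [jointH_eq]
    exact shannon_comp_le (by simp) (hξf.prodMk hξg) Prod.fst
  have h2 : shannonEntropy μ (fun x => (xiMap T f n x, xiMap T g n x))
      = shannonEntropy μ (xiMap T g n)
        + condShannonEntropy μ (xiMap T f n) (xiMap T g n) := chain_rule hξf hξg
  have h3 := condShannon_xi_le hT hf hg n
  rw [jointH_eq (f := g)]
  linarith

end Dyn

/-- Continuity of `h(T,·)` in the entropy metric:
`|h(T,f) − h(T,g)| ≤ H[f|g] + H[g|f]`, where `h(T,f) = lim_n H(ξ_T^n)/n`. -/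
theorem entropy_metric_continuity {X : Type*} [MeasurableSpace X] (μ : Measure X)
    [IsProbabilityMeasure μ] (T : X → X) (hT : MeasurePreserving T μ μ)
    {F G : Type*} [Fintype F] [MeasurableSpace F] [MeasurableSingletonClass F]
    [Fintype G] [MeasurableSpace G] [MeasurableSingletonClass G]
    (f : X → F) (g : X → G) (hf : Measurable f) (hg : Measurable g) :
    ∃ hf' hg' : ℝ,
      Tendsto (fun n : ℕ => jointH μ T f n / (n : ℝ)) atTop (nhds hf') ∧
      Tendsto (fun n : ℕ => jointH μ T g n / (n : ℝ)) atTop (nhds hg') ∧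
      |hf' - hg'| ≤ condShannonEntropy μ f g + condShannonEntropy μ g f := by
  classical
  have hsubf : Subadditive (fun n => jointH μ T f n) :=
    fun m n => jointH_subadditive hT hf m n
  have hsubg : Subadditive (fun n => jointH μ T g n) :=
    fun m n => jointH_subadditive hT hg m n
  have hbddf : BddBelow (Set.range fun n : ℕ => jointH μ T f n / n) := by
    refine ⟨0, ?_⟩
    rintro x ⟨n, rfl⟩
    exact div_nonneg (jointH_nonneg f n) (Nat.cast_nonneg n)
  have hbddg : BddBelow (Set.range fun n : ℕ => jointH μ T g n / n) := by
    refine ⟨0, ?_⟩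
    rintro x ⟨n, rfl⟩
    exact div_nonneg (jointH_nonneg g n) (Nat.cast_nonneg n)
  have hLf := hsubf.tendsto_lim hbddf
  have hLg := hsubg.tendsto_lim hbddg
  have lim_le : ∀ (u v : ℕ → ℝ) (a b c : ℝ),
      Tendsto (fun n : ℕ => u n / n) atTop (nhds a) →
      Tendsto (fun n : ℕ => v n / n) atTop (nhds b) →
      (∀ n : ℕ, u n ≤ v n + n * c) → a ≤ b + c := by
    intro u v a b c hu hv hineq
    have hvc : Tendsto (fun n : ℕ => v n / n + c) atTop (nhds (b + c)) :=
      hv.add_const c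
    refine le_of_tendsto_of_tendsto hu hvc ?_
    filter_upwards [eventually_ge_atTop 1] with n hn
    have hn1 : (1 : ℝ) ≤ n := by exact_mod_cast hn
    have hn' : (0 : ℝ) < n := by linarith
    show u n / n ≤ v n / n + c
    calc u n / n ≤ (v n + n * c) / n := by gcongr; exact hineq n
      _ = v n / n + c := by rw [add_div, mul_div_cancel_left₀ c hn'.ne']
  have h1 : hsubf.lim ≤ hsubg.lim + condShannonEntropy μ f g :=
    lim_le _ _ _ _ _ hLf hLg (fun n => jointH_le hT hf hg n)
  have h2 : hsubg.lim ≤ hsubf.lim + condShannonEntropy μ g f :=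
    lim_le _ _ _ _ _ hLg hLf (fun n => jointH_le hT hg hf n)
  have n1 : 0 ≤ condShannonEntropy μ f g := condShannon_nonneg f g
  have n2 : 0 ≤ condShannonEntropy μ g f := condShannon_nonneg g f
  refine ⟨hsubf.lim, hsubg.lim, hLf, hLg, ?_⟩
  rw [abs_sub_le_iff]
  exact ⟨by linarith, by linarith⟩
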